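/- Let λ₀, λ₁ ∈ ℂ, set κ = λ₀² + √2·λ₁ + 1/2, let b: ℝ → ℂ be differentiable with antiderivative B (B' = b), set β(x) = x + b(x), and let Λ₀(x) = exp(i·√2·λ₀·x - x²/2 - B(x)). Then the function Λ₁(x) = i·(κ·x + b(x)/2 + i·√2·λ₀·x² + 2·i·√2·λ₀·B(x))·Λ₀(x) satisfies the first-order correction equation Λ₁'(x) + (β(x) - i·√2·λ₀)·Λ₁(x) = -(i/2)·Λ₀''(x) + i·β(x)·Λ₀'(x) + i·(√2·λ₁ + (3/2)·β(x)²)·Λ₀(x) for all x ∈ ℝ. -/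

import Mathlib

open Complex

/-- The first-order correction
`Λ₁(x) = i(κx + b(x)/2 + i√2 λ₀ x² + 2i√2 λ₀ ∫b)·Λ₀(x)`, with
`κ = λ₀² + √2 λ₁ + 1/2`, solves the inhomogeneous first-order equation
`Λ₁' + (β - i√2 λ₀)Λ₁ = -(i/2)Λ₀'' + iβΛ₀' + i(√2 λ₁ + (3/2)β²)Λ₀`
of the perturbative expansion of weak q-deformed coherent states, where
`β(x) = x + b(x)` and `Λ₀(x) = exp(i√2 λ₀ x - x²/2 - ∫b)`. -/
theorem first_order_correction_equation
    (lam₀ lam₁ : ℂ) (κ : ℂ)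
    (hκ : κ = lam₀ ^ 2 + Real.sqrt 2 * lam₁ + 1 / 2)
    (b B : ℝ → ℂ)
    (hb : Differentiable ℝ b)
    (hB : ∀ x : ℝ, HasDerivAt B (b x) x)
    (β : ℝ → ℂ) (hβ : ∀ x : ℝ, β x = x + b x)
    (Λ₀ Λ₁ : ℝ → ℂ)
    (hΛ₀ : ∀ x : ℝ,
      Λ₀ x = Complex.exp (I * Real.sqrt 2 * lam₀ * x - x ^ 2 / 2 - B x))
    (hΛ₁ : ∀ x : ℝ,
      Λ₁ x = I * (κ * x + b x / 2 + I * Real.sqrt 2 * lam₀ * x ^ 2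
        + 2 * I * Real.sqrt 2 * lam₀ * B x) * Λ₀ x) :
    ∀ x : ℝ,
      deriv Λ₁ x + (β x - I * Real.sqrt 2 * lam₀) * Λ₁ x
        = -(I / 2) * deriv (deriv Λ₀) x + I * β x * deriv Λ₀ x
          + I * (Real.sqrt 2 * lam₁ + (3 / 2) * β x ^ 2) * Λ₀ x := by
  set c : ℂ := I * Real.sqrt 2 * lam₀ with hc
  have hid : ∀ y : ℝ, HasDerivAt (fun t : ℝ => (t : ℂ)) 1 y := fun y => by
    exact Complex.ofRealCLM.hasDerivAt (x := y)
  have hE : Λ₀ = fun t : ℝ => Complex.exp (c * t - (t : ℂ) ^ 2 / 2 - B t) :=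
    funext fun t => hΛ₀ t
  have hΛ₀d : ∀ y : ℝ, HasDerivAt Λ₀ ((c - y - b y) * Λ₀ y) y := by
    intro y
    have hf : HasDerivAt (fun t : ℝ => c * t - (t : ℂ) ^ 2 / 2 - B t)
        (c - y - b y) y := by
      have hsq : HasDerivAt (fun t : ℝ => (t : ℂ) ^ 2) (2 * (y : ℂ)) y := by
        have h2 := (hid y).mul (hid y)
        simp only [pow_two]
        exact h2.congr_deriv (by ring)
      have h := (((hid y).const_mul c).sub (hsq.div_const 2)).sub (hB y)
      exact h.congr_deriv (by ring)
    have := hf.cexp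
    rw [hE]
    simpa [hE, mul_comm] using this
  have hd1 : deriv Λ₀ = fun y : ℝ => (c - y - b y) * Λ₀ y :=
    funext fun y => (hΛ₀d y).deriv
  intro x
  have hbd : HasDerivAt b (deriv b x) x := (hb x).hasDerivAt
  have hd2 : deriv (deriv Λ₀) x
      = (-1 - deriv b x) * Λ₀ x + (c - x - b x) * ((c - x - b x) * Λ₀ x) := by
    rw [hd1]
    have h1 : HasDerivAt (fun y : ℝ => c - y - b y) (-1 - deriv b x) x := by
      have := ((hasDerivAt_const x c).sub (hid x)).sub hbd
      exact this.congr_deriv (by ring)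
    exact (h1.mul (hΛ₀d x)).deriv
  have hΛ₁E : Λ₁ = fun y : ℝ => I * (κ * y + b y / 2 + c * (y : ℂ) ^ 2
      + 2 * c * B y) * Λ₀ y := funext fun y => by rw [hΛ₁ y]; ring
  have hdΛ₁ : deriv Λ₁ x
      = I * (κ + deriv b x / 2 + 2 * c * x + 2 * c * b x) * Λ₀ x
        + I * (κ * x + b x / 2 + c * (x : ℂ) ^ 2 + 2 * c * B x)
          * ((c - x - b x) * Λ₀ x) := by
    rw [hΛ₁E]
    have hin : HasDerivAt (fun y : ℝ => I * (κ * y + b y / 2 + c * (y : ℂ) ^ 2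
        + 2 * c * B y)) (I * (κ + deriv b x / 2 + 2 * c * x + 2 * c * b x)) x := by
      have hsq : HasDerivAt (fun t : ℝ => (t : ℂ) ^ 2) (2 * (x : ℂ)) x := by
        have h2 := (hid x).mul (hid x)
        simp only [pow_two]
        exact h2.congr_deriv (by ring)
      have h := ((((hid x).const_mul κ).add (hbd.div_const 2)).add
        (hsq.const_mul c)).add ((hB x).const_mul (2 * c))
      have := h.const_mul I
      exact this.congr_deriv (by ring)
    exact (hin.mul (hΛ₀d x)).deriv
  have hs : ((Real.sqrt 2 : ℝ) : ℂ) ^ 2 = 2 := by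
    norm_cast
    exact Real.sq_sqrt (by norm_num)
  have hc2 : c ^ 2 = -2 * lam₀ ^ 2 := by
    rw [hc, mul_pow, mul_pow, Complex.I_sq, hs]; ring
  rw [hdΛ₁, hd2, hd1, hΛ₁ x, hβ x, hκ, hc]
  linear_combination (I / 2 * Λ₀ x) * hc2
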